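/- Symmetrization yields a perfectly fair function: for any value function f : (Fin n → A) → ℝ, define g : (Fin n → A) → ℝ by g(y) := (∑ over ω ∈ S of f(ω·y)) / n!. Then C(g, x) = 0 for every x : Fin n → A. -/

import Mathlib

/-- The action of a permutation `π` on a list of transactions `x : Fin n → A`:
`(π · x) i = x (π⁻¹ i)`. -/
def permAct {n : ℕ} {A : Type*} (π : Equiv.Perm (Fin n)) (x : Fin n → A) : Fin n → A :=
  fun i => x (π⁻¹ i)

/-- The cost of MEV: `C(f, x) = max_{π ∈ S} f(π·x) - (∑_{π ∈ S} f(π·x)) / n!`. -/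
noncomputable def mevCost {n : ℕ} {A : Type*} (f : (Fin n → A) → ℝ) (x : Fin n → A) : ℝ :=
  (Finset.univ.sup' Finset.univ_nonempty fun π : Equiv.Perm (Fin n) => f (permAct π x)) -
    (∑ π : Equiv.Perm (Fin n), f (permAct π x)) / (Nat.factorial n : ℝ)

/-- Symmetrization yields a perfectly fair function: averaging the value function over
all permutations gives a function with zero cost of MEV at every `x`. -/
theorem mevCost_symmetrization_eq_zero {n : ℕ} {A : Type*} (hn : 1 ≤ n)
    (f : (Fin n → A) → ℝ) (x : Fin n → A) :
    mevCost
      (fun y => (∑ ω : Equiv.Perm (Fin n), f (permAct ω y)) / (Nat.factorial n : ℝ))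
      x = 0 := by
  have key : ∀ π : Equiv.Perm (Fin n),
      (∑ ω : Equiv.Perm (Fin n), f (permAct ω (permAct π x)))
        = ∑ ω : Equiv.Perm (Fin n), f (permAct ω x) := by
    intro π
    rw [← Equiv.sum_comp (Equiv.mulRight π) fun ω => f (permAct ω x)]
    rfl
  set c : ℝ := (∑ ω : Equiv.Perm (Fin n), f (permAct ω x)) / (Nat.factorial n : ℝ) with hc
  have hconst : ∀ π : Equiv.Perm (Fin n),
      (fun y => (∑ ω : Equiv.Perm (Fin n), f (permAct ω y)) / (Nat.factorial n : ℝ))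
        (permAct π x) = c := by
    intro π
    simp only [key π, hc]
  unfold mevCost
  rw [Finset.sum_congr rfl fun π _ => hconst π, Finset.sup'_congr _ rfl fun π _ => hconst π]
  have hcard : (Finset.univ : Finset (Equiv.Perm (Fin n))).card = Nat.factorial n := by
    simp [Fintype.card_perm]
  have hfac : (Nat.factorial n : ℝ) ≠ 0 := by positivity
  rw [Finset.sup'_const, Finset.sum_const, hcard]
  field_simp
  rw [nsmul_eq_mul]
  ring
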